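/- arXiv:0809.1791 — 4 statements merged into one kernel-verified Lean document; each statement's English description precedes it below -/
import Mathlib

section
/- The subring of ℂ[x₁,x₂,x₃,x₄] consisting of polynomials invariant under the group H ≅ (ℤ/5ℤ)³ (acting by h₁,h₂,h₃ as above) is generated by the monomials z₀ = x₁x₂x₃x₄ and z_i = x_i⁵ for i = 1,...,4, and these satisfy the relation z₀⁵ = z₁z₂z₃z₄. -/
open MvPolynomial

noncomputable def sig (ζ : ℂ) (a : Fin 4 → ℤ) : MvPolynomial (Fin 4) ℂ →ₐ[ℂ] MvPolynomial (Fin 4) ℂ :=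
  aeval (fun i => ζ ^ (a i) • X i)

lemma zpow_sum_eq {ι : Type*} (ζ : ℂ) (h : ζ ≠ 0) (s : Finset ι) (e : ι → ℤ) :
    ζ ^ (∑ i ∈ s, e i) = ∏ i ∈ s, ζ ^ (e i) := by
  classical
  induction s using Finset.induction_on with
  | empty => simp
  | insert _ _ hj ih => rw [Finset.sum_insert hj, Finset.prod_insert hj, zpow_add₀ h, ih]

lemma monomial_one_eq (d : Fin 4 →₀ ℕ) :
    (monomial d 1 : MvPolynomial (Fin 4) ℂ) = ∏ i, X i ^ d i := by
  rw [monomial_eq, C_1, one_mul, Finsupp.prod_fintype]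
  intro i; exact pow_zero _

lemma sig_monomial (ζ : ℂ) (hζ0 : ζ ≠ 0) (a : Fin 4 → ℤ) (d : Fin 4 →₀ ℕ) (c : ℂ) :
    sig ζ a (monomial d c) = ζ ^ (∑ i, a i * (d i : ℤ)) • monomial d c := by
  rw [sig, aeval_monomial, Finsupp.prod_fintype _ _ (fun i => pow_zero _)]
  simp only [smul_eq_C_mul, mul_pow, ← map_pow, algebraMap_eq]
  rw [Finset.prod_mul_distrib, ← map_prod, monomial_eq,
    Finsupp.prod_fintype _ _ (fun i => pow_zero _)]
  have : ∀ i : Fin 4, (ζ ^ a i) ^ (d i) = ζ ^ (a i * (d i : ℤ)) := by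
    intro i; rw [← zpow_natCast (ζ ^ a i), ← zpow_mul]
  simp_rw [this]
  rw [zpow_sum_eq ζ hζ0]
  ring

lemma coeff_sig (ζ : ℂ) (hζ0 : ζ ≠ 0) (a : Fin 4 → ℤ) (p : MvPolynomial (Fin 4) ℂ)
    (d : Fin 4 →₀ ℕ) :
    coeff d (sig ζ a p) = ζ ^ (∑ i, a i * (d i : ℤ)) * coeff d p := by
  nth_rewrite 1 [p.as_sum]
  rw [map_sum, coeff_sum]
  simp_rw [sig_monomial ζ hζ0, coeff_smul, coeff_monomial, smul_eq_mul, mul_ite, mul_zero]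
  rw [Finset.sum_ite_eq' p.support d]
  by_cases hd : d ∈ p.support
  · simp [hd]
  · simp [hd, MvPolynomial.notMem_support_iff.mp hd]

lemma sig_eq_self_iff (ζ : ℂ) (hζ : IsPrimitiveRoot ζ 5) (a : Fin 4 → ℤ)
    (p : MvPolynomial (Fin 4) ℂ) :
    sig ζ a p = p ↔ ∀ d ∈ p.support, (5 : ℤ) ∣ ∑ i, a i * (d i : ℤ) := by
  have hζ0 : ζ ≠ 0 := hζ.ne_zero (by norm_num)
  constructor
  · intro h d hd
    have h2 := congrArg (coeff d) h
    rw [coeff_sig ζ hζ0] at h2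
    have hc : coeff d p ≠ 0 := mem_support_iff.mp hd
    have : ζ ^ (∑ i, a i * (d i : ℤ)) = 1 := by
      have h3 : ζ ^ (∑ i, a i * (d i : ℤ)) * coeff d p = 1 * coeff d p := by
        rw [h2, one_mul]
      exact mul_right_cancel₀ hc h3
    exact (hζ.zpow_eq_one_iff_dvd _).mp this
  · intro h
    ext d
    rw [coeff_sig ζ hζ0]
    by_cases hd : d ∈ p.support
    · rw [(hζ.zpow_eq_one_iff_dvd _).mpr (h d hd), one_mul]
    · rw [MvPolynomial.notMem_support_iff.mp hd, mul_zero]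

lemma mem_adjoin_of_congr (d : Fin 4 →₀ ℕ)
    (h1 : (5 : ℤ) ∣ (d 1 : ℤ) - d 0) (h2 : (5 : ℤ) ∣ (d 2 : ℤ) - d 0)
    (h3 : (5 : ℤ) ∣ (d 3 : ℤ) - d 0) :
    (monomial d 1 : MvPolynomial (Fin 4) ℂ) ∈
      Algebra.adjoin ℂ ({X 0 * X 1 * X 2 * X 3, X 0 ^ 5, X 1 ^ 5, X 2 ^ 5, X 3 ^ 5} :
        Set (MvPolynomial (Fin 4) ℂ)) := by
  have hall : ∀ i : Fin 4, (5 : ℤ) ∣ (d i : ℤ) - d 0 := by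
    intro i
    fin_cases i
    · show (5 : ℤ) ∣ (d 0 : ℤ) - d 0
      simp
    · exact h1
    · exact h2
    · exact h3
  have hd : ∀ i : Fin 4, d i = 5 * (d i / 5) + d 0 % 5 := by
    intro i; have := hall i; omega
  rw [monomial_one_eq]
  have key : ∀ i : Fin 4, (X i : MvPolynomial (Fin 4) ℂ) ^ d i
      = (X i ^ 5) ^ (d i / 5) * X i ^ (d 0 % 5) := by
    intro i; rw [← pow_mul, ← pow_add, ← hd i]
  simp_rw [key]
  rw [Finset.prod_mul_distrib]
  apply mul_mem
  · refine prod_mem fun i _ => pow_mem (Algebra.subset_adjoin ?_) _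
    fin_cases i
    · exact Set.mem_insert_of_mem _ (Set.mem_insert _ _)
    · exact Set.mem_insert_of_mem _ (Set.mem_insert_of_mem _ (Set.mem_insert _ _))
    · exact Set.mem_insert_of_mem _ (Set.mem_insert_of_mem _ (Set.mem_insert_of_mem _
        (Set.mem_insert _ _)))
    · exact Set.mem_insert_of_mem _ (Set.mem_insert_of_mem _ (Set.mem_insert_of_mem _
        (Set.mem_insert_of_mem _ rfl)))
  · rw [Finset.prod_pow]
    refine pow_mem ?_ _
    rw [Fin.prod_univ_four]
    exact Algebra.subset_adjoin (Set.mem_insert _ _)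

lemma sig_fix_z0 (ζ : ℂ) (a : Fin 4 → ℤ) (h : ζ ^ a 0 * ζ ^ a 1 * ζ ^ a 2 * ζ ^ a 3 = 1) :
    sig ζ a (X 0 * X 1 * X 2 * X 3 : MvPolynomial (Fin 4) ℂ) = X 0 * X 1 * X 2 * X 3 := by
  simp only [sig, map_mul, aeval_X, smul_eq_C_mul]
  have e : (C (ζ ^ a 0) * X 0) * (C (ζ ^ a 1) * X 1) * (C (ζ ^ a 2) * X 2) * (C (ζ ^ a 3) * X 3)
      = C (ζ ^ a 0 * ζ ^ a 1 * ζ ^ a 2 * ζ ^ a 3) * (X 0 * X 1 * X 2 * X 3 :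
        MvPolynomial (Fin 4) ℂ) := by
    rw [map_mul, map_mul, map_mul]; ring
  rw [e, h, map_one, one_mul]

lemma sig_fix_pow5 (ζ : ℂ) (hζ : IsPrimitiveRoot ζ 5) (a : Fin 4 → ℤ) (i : Fin 4) :
    sig ζ a (X i ^ 5 : MvPolynomial (Fin 4) ℂ) = X i ^ 5 := by
  simp only [sig, map_pow, aeval_X, smul_pow]
  rw [← zpow_natCast (ζ ^ a i), ← zpow_mul, mul_comm, zpow_mul, hζ.zpow_eq_one, one_zpow, one_smul]



open MvPolynomial in
theorem stmt_10 (ζ : ℂ) (hζ : IsPrimitiveRoot ζ 5) :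
    let σ : (Fin 4 → ℤ) → (MvPolynomial (Fin 4) ℂ →ₐ[ℂ] MvPolynomial (Fin 4) ℂ) :=
      fun a => aeval (fun i => ζ ^ (a i) • X i)
    let z0 : MvPolynomial (Fin 4) ℂ := X 0 * X 1 * X 2 * X 3
    let z : Fin 4 → MvPolynomial (Fin 4) ℂ := fun i => X i ^ 5
    (∀ p : MvPolynomial (Fin 4) ℂ,
        (σ ![-1, 1, 0, 0] p = p ∧ σ ![-1, 0, 1, 0] p = p ∧ σ ![-1, 0, 0, 1] p = p) ↔
          p ∈ Algebra.adjoin ℂ ({z0, z 0, z 1, z 2, z 3} : Set (MvPolynomial (Fin 4) ℂ))) ∧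
      z0 ^ 5 = z 0 * z 1 * z 2 * z 3 := by
  intro σ z0 z
  have hσ : σ = sig ζ := rfl
  have hζ0 : ζ ≠ 0 := hζ.ne_zero (by norm_num)
  constructor
  · intro p
    rw [hσ]
    constructor
    · rintro ⟨h1, h2, h3⟩
      rw [sig_eq_self_iff ζ hζ] at h1 h2 h3
      show p ∈ Algebra.adjoin ℂ
        ({X 0 * X 1 * X 2 * X 3, X 0 ^ 5, X 1 ^ 5, X 2 ^ 5, X 3 ^ 5} :
          Set (MvPolynomial (Fin 4) ℂ))
      rw [p.as_sum]
      refine Subalgebra.sum_mem _ fun d hd => ?_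
      have e1 := h1 d hd
      have e2 := h2 d hd
      have e3 := h3 d hd
      rw [Fin.sum_univ_four] at e1 e2 e3
      simp only [Matrix.cons_val_zero, Matrix.cons_val_one, Matrix.head_cons,
        Matrix.cons_val_two, Matrix.tail_cons, Matrix.cons_val_three, neg_mul, one_mul,
        zero_mul, add_zero, neg_add_cancel] at e1 e2 e3
      have hsm : monomial d (coeff d p) = coeff d p • monomial d 1 := by
        rw [smul_monomial, smul_eq_mul, mul_one]
      rw [hsm]
      exact Subalgebra.smul_mem _
        (mem_adjoin_of_congr d (by omega) (by omega) (by omega)) _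
    · intro hp
      have key : ∀ a : Fin 4 → ℤ, ζ ^ a 0 * ζ ^ a 1 * ζ ^ a 2 * ζ ^ a 3 = 1 →
          sig ζ a p = p := by
        intro a ha
        have hmem : p ∈ AlgHom.equalizer (sig ζ a) (AlgHom.id ℂ (MvPolynomial (Fin 4) ℂ)) := by
          apply Algebra.adjoin_le ?_ hp
          rintro q (rfl | rfl | rfl | rfl | rfl)
          · exact sig_fix_z0 ζ a ha
          all_goals exact sig_fix_pow5 ζ hζ a _
        simpa using (AlgHom.mem_equalizer _ _ _).mp hmem
      refine ⟨key _ ?_, key _ ?_, key _ ?_⟩ <;>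
        · simp only [Matrix.cons_val_zero, Matrix.cons_val_one, Matrix.head_cons,
            Matrix.cons_val_two, Matrix.tail_cons, Matrix.cons_val_three, zpow_neg,
            zpow_one, zpow_zero, mul_one]
          exact inv_mul_cancel₀ hζ0
  · show (X 0 * X 1 * X 2 * X 3 : MvPolynomial (Fin 4) ℂ) ^ 5
      = X 0 ^ 5 * X 1 ^ 5 * X 2 ^ 5 * X 3 ^ 5
    ring
end

section
/- Let A be an n×n integer matrix with AB = dI, where B is an integer matrix and the row sums of B all equal m and column sums of B all equal m, d = mn. Substituting x_j = ∏ₖ y_k^{b_{jk}} into F_{A,t} = Σ_i ∏_j x_j^{a_{ij}} − nt·∏_j x_j yields Σ_i y_i^d − nt·(∏ₖ y_k)^m. -/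
lemma zpow_sum' {G : Type*} [CommGroup G] {ι : Type*} (a : G) (s : Finset ι) (f : ι → ℤ) :
    a ^ (∑ i ∈ s, f i) = ∏ i ∈ s, a ^ f i := by
  classical
  induction s using Finset.induction with
  | empty => simp
  | insert _ _ h ih => rw [Finset.sum_insert h, Finset.prod_insert h, zpow_add, ih]

theorem stmt_13 {K : Type*} [Field K] (n m : ℕ) (d : ℤ) (hd : d = m * n)
    (A B : Matrix (Fin n) (Fin n) ℤ)
    (hAB : A * B = d • (1 : Matrix (Fin n) (Fin n) ℤ))
    (hrowB : ∀ j, ∑ k, B j k = (m : ℤ)) (hcolB : ∀ k, ∑ j, B j k = (m : ℤ))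
    (y : Fin n → Kˣ) (t : K) :
    let x : Fin n → Kˣ := fun j => ∏ k, y k ^ B j k
    (∑ i, ((∏ j, x j ^ A i j : Kˣ) : K)) - n * t * ((∏ j, x j : Kˣ) : K) =
      (∑ i, ((y i ^ d : Kˣ) : K)) - n * t * ((∏ k, y k ^ (m : ℤ) : Kˣ) : K) := by
  intro x
  have h1 : ∀ i, (∏ j, x j ^ A i j : Kˣ) = y i ^ d := by
    intro i
    have key : (∏ j, x j ^ A i j : Kˣ) = ∏ k, y k ^ ((A * B) i k) := by
      simp only [x, ← Finset.prod_zpow, ← zpow_mul]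
      rw [Finset.prod_comm]
      refine Finset.prod_congr rfl fun k _ => ?_
      rw [← zpow_sum']
      congr 1
      rw [Matrix.mul_apply]
      exact Finset.sum_congr rfl fun j _ => mul_comm _ _
    rw [key, hAB]
    simp only [Matrix.smul_apply, Matrix.one_apply, smul_eq_mul, mul_ite, mul_one, mul_zero]
    rw [Finset.prod_congr rfl (fun k _ => (apply_ite (y k ^ · : ℤ → Kˣ) (i = k) d 0))]
    simp [Finset.prod_ite_eq]
  have h2 : (∏ j, x j : Kˣ) = ∏ k, y k ^ (m : ℤ) := by
    simp only [x]
    rw [Finset.prod_comm]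
    refine Finset.prod_congr rfl fun k _ => ?_
    rw [← zpow_sum', hcolB]
  simp only [h1, h2]
end

section
/- The group Γ_d := {a ∈ (ℤ/dℤ)ⁿ : a₁+⋯+aₙ ≡ 0 mod n} / ⟨(1,1,...,1)⟩, where d = mn, is isomorphic to μ_m × μ_d^{n−2}, i.e., to (ℤ/mℤ) × (ℤ/dℤ)^{n−2}. -/
theorem stmt_15 (n m : ℕ) (hn : 2 ≤ n) (hm : 0 < m) (d : ℕ) (hd : d = m * n)
    (hdvd : n ∣ d)
    (S : AddSubgroup (Fin n → ZMod d))
    (hS : ∀ a, a ∈ S ↔ (ZMod.castHom hdvd (ZMod n)) (∑ i, a i) = 0)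
    (ones : S) (hones : (ones : Fin n → ZMod d) = fun _ => 1) :
    Nonempty ((S ⧸ AddSubgroup.closure {ones}) ≃+ (ZMod m × (Fin (n - 2) → ZMod d))) := by
  obtain ⟨k, rfl⟩ : ∃ k, n = k + 2 := ⟨n - 2, by omega⟩
  show Nonempty ((S ⧸ AddSubgroup.closure {ones}) ≃+ (ZMod m × (Fin k → ZMod d)))
  haveI : NeZero m := ⟨hm.ne'⟩
  haveI : NeZero d := ⟨hd ▸ Nat.mul_ne_zero hm.ne' (by omega)⟩
  -- the additive map ι : ZMod m →+ ZMod d, t ↦ t • (n : ZMod d)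
  have hf0 : (zmultiplesHom (ZMod d) ((k + 2 : ℕ) : ZMod d)) ((m : ℕ) : ℤ) = 0 := by
    rw [zmultiplesHom_apply, natCast_zsmul, nsmul_eq_mul, ← Nat.cast_mul, ← hd,
      ZMod.natCast_self]
  set ι : ZMod m →+ ZMod d :=
    (ZMod.lift m) ⟨zmultiplesHom (ZMod d) ((k + 2 : ℕ) : ZMod d), hf0⟩ with hι
  have key : ∀ j : ℕ, ι ((j : ℕ) : ZMod m) = ((j : ℕ) : ZMod d) * ((k + 2 : ℕ) : ZMod d) := by
    intro j
    have : ((j : ℕ) : ZMod m) = (((j : ℕ) : ℤ) : ZMod m) := by push_cast; ring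
    rw [this, hι, ZMod.lift_coe, zmultiplesHom_apply, zsmul_eq_mul]
    push_cast; ring
  have hιinj : ∀ t : ZMod m, ι t = 0 → t = 0 := by
    intro t ht
    have h1 : ι ((t.val : ℕ) : ZMod m) = 0 := by
      rwa [ZMod.natCast_val, ZMod.cast_id]
    rw [key] at h1
    have h2 : ((t.val * (k + 2) : ℕ) : ZMod d) = 0 := by rw [Nat.cast_mul]; exact h1
    rw [ZMod.natCast_eq_zero_iff, hd] at h2
    have h3 : m ∣ t.val := (Nat.mul_dvd_mul_iff_right (show 0 < k + 2 by omega)).mp h2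
    have h4 : t.val < m := ZMod.val_lt t
    have h5 : t.val = 0 := Nat.eq_zero_of_dvd_of_lt h3 h4
    exact (ZMod.val_eq_zero t).mp h5
  -- the homomorphism into the ambient group
  let H0 : ZMod m × (Fin k → ZMod d) →+ (Fin (k + 2) → ZMod d) :=
    AddMonoidHom.mk' (fun p => Fin.cons 0 (Fin.cons (ι p.1 - ∑ j, p.2 j) p.2)) (by
      rintro ⟨t1, c1⟩ ⟨t2, c2⟩
      funext i
      refine Fin.cases ?_ (fun j => ?_) i
      · simp
      · refine Fin.cases ?_ (fun j' => ?_) j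
        · simp only [Fin.cons_succ, Fin.cons_zero, Pi.add_apply, Prod.fst_add, Prod.snd_add,
            map_add]
          rw [Finset.sum_add_distrib]
          abel
        · simp)
  have hH0 : ∀ p i, H0 p i = (Fin.cons 0 (Fin.cons (ι p.1 - ∑ j, p.2 j) p.2) : Fin (k + 2) → ZMod d) i := by
    intro p i; rfl
  have hmem : ∀ p, H0 p ∈ S := by
    intro p
    rw [hS]
    have hsum : ∑ i, H0 p i = ι p.1 := by
      show ∑ i : Fin (k + 2), Fin.cons 0 (Fin.cons (ι p.1 - ∑ j, p.2 j) p.2) i = _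
      rw [Fin.sum_cons, Fin.sum_cons]
      abel
    rw [hsum]
    have : ι p.1 = ((p.1.val : ℕ) : ZMod d) * ((k + 2 : ℕ) : ZMod d) := by
      rw [← key, ZMod.natCast_val, ZMod.cast_id]
    rw [this, map_mul, map_natCast, map_natCast, ZMod.natCast_self, mul_zero]
  let H : ZMod m × (Fin k → ZMod d) →+ S := H0.codRestrict S hmem
  let φ := (QuotientAddGroup.mk' (AddSubgroup.closure {ones})).comp H
  have hval : ∀ p, ((H p : S) : Fin (k + 2) → ZMod d) = H0 p := fun _ => rfl
  have hinj : Function.Injective φ := by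
    rw [injective_iff_map_eq_zero]
    rintro ⟨t, c⟩ hp
    have h1 : H (t, c) ∈ AddSubgroup.closure {ones} :=
      (QuotientAddGroup.eq_zero_iff _).mp hp
    rw [AddSubgroup.mem_closure_singleton] at h1
    obtain ⟨z, hz⟩ := h1
    have hz' : z • ((ones : S) : Fin (k + 2) → ZMod d) = H0 (t, c) := by
      have h := congrArg (Subtype.val) hz
      rw [hval] at h
      rw [← h]
      rfl
    rw [hones] at hz'
    have hz0' : ((z : ℤ) : ZMod d) = 0 := by
      have h0 := congrFun hz' 0
      rw [hH0] at h0
      simp only [Fin.cons_zero, Pi.smul_apply] at h0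
      simpa [zsmul_eq_mul] using h0
    have hzero : H0 (t, c) = 0 := by
      rw [← hz']
      funext i
      simp [zsmul_eq_mul, hz0']
    have hc : c = 0 := by
      funext j
      have := congrFun hzero (j.succ.succ)
      rw [hH0] at this
      simpa using this
    have ht : t = 0 := by
      have h2 := congrFun hzero (0 : Fin (k + 1)).succ
      rw [hH0] at h2
      simp only [Fin.cons_succ, Fin.cons_zero, Pi.zero_apply] at h2
      rw [hc] at h2
      simp only [Prod.snd, Pi.zero_apply, Finset.sum_const_zero, sub_zero] at h2
      exact hιinj t h2
    simp [ht, hc, Prod.ext_iff]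
  have hsurj : Function.Surjective φ := by
    intro q
    induction q using QuotientAddGroup.induction_on with
    | H a =>
      set r : ℕ := ((a : Fin (k + 2) → ZMod d) 0).val with hr
      set a' : S := a - r • ones with ha'
      have ha'val : ((a' : S) : Fin (k + 2) → ZMod d)
          = (a : Fin (k + 2) → ZMod d) - r • ((ones : S) : Fin (k + 2) → ZMod d) := by
        rw [ha']; push_cast; rfl
      have ha'0 : ((a' : S) : Fin (k + 2) → ZMod d) 0 = 0 := by
        rw [ha'val, hones]
        show (a : Fin (k + 2) → ZMod d) 0
            - (((a : Fin (k + 2) → ZMod d) 0).val : ℕ) • (1 : ZMod d) = 0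
        rw [nsmul_eq_mul, mul_one, ZMod.natCast_val, ZMod.cast_id, sub_self]
      -- sum divisibility
      have ha'S := (hS _).mp a'.2
      set x : ZMod d := ∑ i, ((a' : S) : Fin (k + 2) → ZMod d) i with hx
      have hxv : ((x.val : ℕ) : ZMod (k + 2)) = 0 := by
        rw [ZMod.natCast_val]
        rw [ZMod.castHom_apply] at ha'S
        exact ha'S
      rw [ZMod.natCast_eq_zero_iff] at hxv
      obtain ⟨j, hj⟩ := hxv
      set t : ZMod m := ((j : ℕ) : ZMod m) with htdef
      set c : Fin k → ZMod d := fun i => ((a' : S) : Fin (k + 2) → ZMod d) i.succ.succ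
        with hcdef
      have hιt : ι t = x := by
        rw [htdef, key]
        have : ((j : ℕ) : ZMod d) * ((k + 2 : ℕ) : ZMod d) = (((k + 2) * j : ℕ) : ZMod d) := by
          push_cast; ring
        rw [this, ← hj, ZMod.natCast_val, ZMod.cast_id]
      have hxsum : x = ((a' : S) : Fin (k + 2) → ZMod d) (0 : Fin (k+1)).succ + ∑ i, c i := by
        rw [hx, Fin.sum_univ_succ, Fin.sum_univ_succ, ha'0, zero_add]
      have hHa' : H (t, c) = a' := by
        apply Subtype.ext
        rw [hval]
        funext i
        rw [hH0]
        refine Fin.cases ?_ (fun j' => ?_) i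
        · rw [Fin.cons_zero, ha'0]
        · refine Fin.cases ?_ (fun j'' => ?_) j'
          · rw [Fin.cons_succ, Fin.cons_zero, hιt, hxsum]
            abel
          · rw [Fin.cons_succ, Fin.cons_succ]
      refine ⟨(t, c), ?_⟩
      show (QuotientAddGroup.mk' (AddSubgroup.closure {ones})) (H (t, c))
          = (QuotientAddGroup.mk' (AddSubgroup.closure {ones})) a
      rw [hHa']
      rw [QuotientAddGroup.mk'_eq_mk']
      exact ⟨r • ones, AddSubgroup.nsmul_mem _ (AddSubgroup.mem_closure_singleton.mpr ⟨1, one_smul _ _⟩) r, by rw [ha']; abel⟩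
  exact ⟨(AddEquiv.ofBijective φ ⟨hinj, hsurj⟩).symm⟩
end

section
/- In the quotient group Γ = {a ∈ (ℤ/1025ℤ)⁵ : Σa_i ≡ 0 mod 5}/⟨(1,...,1)⟩, the image subgroup H_A under a ↦ Ba (with B = 1025·A⁻¹ for A = 4I+P) is cyclic of order 41, and the kernel Γ_A is isomorphic to (ℤ/5ℤ) × (ℤ/1025ℤ)³. -/
set_option maxHeartbeats 1000000 in
theorem stmt_17 (hdvd : (5 : ℕ) ∣ 1025)
    (Bz : Matrix (Fin 5) (Fin 5) (ZMod 1025))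
    (hB : ∀ j k, Bz j k = ((![256, -64, 16, -4, 1] : Fin 5 → ℤ) (k - j) : ZMod 1025))
    (S : AddSubgroup (Fin 5 → ZMod 1025))
    (hS : ∀ a, a ∈ S ↔ (ZMod.castHom hdvd (ZMod 5)) (∑ i, a i) = 0)
    (ones : S) (hones : (ones : Fin 5 → ZMod 1025) = fun _ => 1)
    (f : (S ⧸ AddSubgroup.closure {ones}) →+
      ((Fin 5 → ZMod 1025) ⧸ AddSubgroup.closure {(fun _ => 1 : Fin 5 → ZMod 1025)}))
    (hf : ∀ a : S, f (QuotientAddGroup.mk a) =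
      QuotientAddGroup.mk (Bz.mulVec (a : Fin 5 → ZMod 1025))) :
    Nonempty (f.range ≃+ ZMod 41) ∧
      Nonempty (f.ker ≃+ (ZMod 5 × (Fin 3 → ZMod 1025))) := by
  -- basic notation
  have h41dvd : (41 : ℕ) ∣ 1025 := by norm_num
  set π5 := ZMod.castHom hdvd (ZMod 5) with hπ5def
  set π41 := ZMod.castHom h41dvd (ZMod 41) with hπ41def
  have h1025 : (1025 : ZMod 1025) = 0 := by decide
  have h41c : (41 : ZMod 41) = 0 := by decide
  have h5c : (5 : ZMod 5) = 0 := by decide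
  have hval : ∀ z : ZMod 1025, ((z.val : ℕ) : ZMod 1025) = z :=
    fun z => ZMod.natCast_rightInverse z
  have hcast5 : ∀ z : ZMod 1025, π5 z = 0 ↔ 5 ∣ z.val := by
    intro z
    rw [ZMod.castHom_apply, ← ZMod.natCast_val, ZMod.natCast_eq_zero_iff]
  have hcast41 : ∀ z : ZMod 1025, π41 z = 0 ↔ 41 ∣ z.val := by
    intro z
    rw [ZMod.castHom_apply, ← ZMod.natCast_val, ZMod.natCast_eq_zero_iff]
  have hfive : ∀ z : ZMod 1025, π5 z = 0 → π41 z = 0 → 5 * z = 0 := by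
    intro z hz5 hz41
    rw [hcast5] at hz5; rw [hcast41] at hz41
    have h1 : ((5 * z.val : ℕ) : ZMod 1025) = 0 := by
      rw [ZMod.natCast_eq_zero_iff]; omega
    calc 5 * z = ((5 * z.val : ℕ) : ZMod 1025) := by push_cast [hval]; ring
    _ = 0 := h1
  -- mulVec expansion
  have hmv0 : ∀ a : Fin 5 → ZMod 1025, Bz.mulVec a 0
      = 256 * a 0 - 64 * a 1 + 16 * a 2 - 4 * a 3 + a 4 := by
    intro a
    simp [Matrix.mulVec, dotProduct, Fin.sum_univ_five, hB,
      show ((-1:Fin 5)) = 4 from rfl, show ((-2:Fin 5)) = 3 from rfl,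
      show ((-3:Fin 5)) = 2 from rfl, show ((-4:Fin 5)) = 1 from rfl]
    push_cast; ring
  have hmv1 : ∀ a : Fin 5 → ZMod 1025, Bz.mulVec a 1
      = a 0 + 256 * a 1 - 64 * a 2 + 16 * a 3 - 4 * a 4 := by
    intro a
    simp [Matrix.mulVec, dotProduct, Fin.sum_univ_five, hB,
      show ((-1:Fin 5)) = 4 from rfl, show ((-2:Fin 5)) = 3 from rfl,
      show ((-3:Fin 5)) = 2 from rfl, show ((-4:Fin 5)) = 1 from rfl]
    push_cast; ring
  have hmv2 : ∀ a : Fin 5 → ZMod 1025, Bz.mulVec a 2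
      = -4 * a 0 + a 1 + 256 * a 2 - 64 * a 3 + 16 * a 4 := by
    intro a
    simp [Matrix.mulVec, dotProduct, Fin.sum_univ_five, hB,
      show ((-1:Fin 5)) = 4 from rfl, show ((-2:Fin 5)) = 3 from rfl,
      show ((-3:Fin 5)) = 2 from rfl, show ((-4:Fin 5)) = 1 from rfl]
    push_cast; ring
  have hmv3 : ∀ a : Fin 5 → ZMod 1025, Bz.mulVec a 3
      = 16 * a 0 - 4 * a 1 + a 2 + 256 * a 3 - 64 * a 4 := by
    intro a
    simp [Matrix.mulVec, dotProduct, Fin.sum_univ_five, hB,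
      show ((-1:Fin 5)) = 4 from rfl, show ((-2:Fin 5)) = 3 from rfl,
      show ((-3:Fin 5)) = 2 from rfl, show ((-4:Fin 5)) = 1 from rfl]
    push_cast; ring
  have hmv4 : ∀ a : Fin 5 → ZMod 1025, Bz.mulVec a 4
      = -64 * a 0 + 16 * a 1 - 4 * a 2 + a 3 + 256 * a 4 := by
    intro a
    simp [Matrix.mulVec, dotProduct, Fin.sum_univ_five, hB,
      show ((-1:Fin 5)) = 4 from rfl, show ((-2:Fin 5)) = 3 from rfl,
      show ((-3:Fin 5)) = 2 from rfl, show ((-4:Fin 5)) = 1 from rfl]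
    push_cast; ring
  -- membership of constant-difference vectors in the closure of the all-ones vector
  have hmemK : ∀ v : Fin 5 → ZMod 1025, (∀ j, v j = v 0) →
      v ∈ AddSubgroup.closure {(fun _ => 1 : Fin 5 → ZMod 1025)} := by
    intro v h
    rw [AddSubgroup.mem_closure_singleton]
    refine ⟨((v 0).val : ℤ), ?_⟩
    funext j
    show ((v 0).val : ℤ) • (1 : ZMod 1025) = v j
    rw [zsmul_one, h j]
    push_cast [hval]
    rfl
  have hrange : ∀ a : Fin 5 → ZMod 1025, a ∈ S → ∀ j : Fin 5,
      Bz.mulVec a j - (((33 * π41 (a 0 + 10 * a 1 + 100 * a 2 + 1000 * a 3 + 10000 * a 4)).val : ℕ) : ZMod 1025) * (![255, 5, -20, 80, -320] : Fin 5 → ZMod 1025) j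
      = Bz.mulVec a 0 - (((33 * π41 (a 0 + 10 * a 1 + 100 * a 2 + 1000 * a 3 + 10000 * a 4)).val : ℕ) : ZMod 1025) * (![255, 5, -20, 80, -320] : Fin 5 → ZMod 1025) 0 := by
    intro a ha
    have hsa : π5 (a 0 + a 1 + a 2 + a 3 + a 4) = 0 := by
      have := (hS a).mp ha
      rwa [Fin.sum_univ_five] at this
    set lam : ZMod 41 := π41 (a 0 + 10 * a 1 + 100 * a 2 + 1000 * a 3 + 10000 * a 4) with hlam
    set ν : ZMod 1025 := (((33 * lam).val : ℕ) : ZMod 1025) with hνdef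
    have hν41 : π41 ν = 33 * lam := by
      rw [hνdef, map_natCast, ZMod.natCast_val, ZMod.cast_id]
    have h1 : Bz.mulVec a 1 - ν * (![255, 5, -20, 80, -320] : Fin 5 → ZMod 1025) 1
        = Bz.mulVec a 0 - ν * (![255, 5, -20, 80, -320] : Fin 5 → ZMod 1025) 0 := by
      have hZ : 5 * ((-51) * a 0 + (64) * a 1 + (-16) * a 2 + (4) * a 3 + (-1) * a 4 + (50) * ν : ZMod 1025) = 0 := by
        apply hfive
        · have e : ((-51) * a 0 + (64) * a 1 + (-16) * a 2 + (4) * a 3 + (-1) * a 4 + (50) * ν : ZMod 1025) = (4) * (a 0 + a 1 + a 2 + a 3 + a 4) + 5 * ((-11) * a 0 + (12) * a 1 + (-4) * a 2 + (-1) * a 4 + (10) * ν : ZMod 1025) := by ring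
          rw [e, map_add, map_mul, map_mul, map_ofNat, map_ofNat, hsa, h5c]
          ring
        · have e : ((-51) * a 0 + (64) * a 1 + (-16) * a 2 + (4) * a 3 + (-1) * a 4 + (50) * ν : ZMod 1025) = (31) * (a 0 + 10 * a 1 + 100 * a 2 + 1000 * a 3 + 10000 * a 4) + (50) * ν + 41 * ((-2) * a 0 + (-6) * a 1 + (-76) * a 2 + (-756) * a 3 + (-7561) * a 4 : ZMod 1025) := by ring
          rw [e, map_add, map_add, map_mul, map_mul, map_mul, map_ofNat, map_ofNat, map_ofNat, hν41]
          linear_combination (41 * lam + π41 ((-2) * a 0 + (-6) * a 1 + (-76) * a 2 + (-756) * a 3 + (-7561) * a 4 : ZMod 1025)) * h41c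
      simp only [hmv1, hmv0, Matrix.cons_val_zero, Matrix.cons_val_one, Matrix.head_cons,
        Matrix.cons_val_two, Matrix.tail_cons, Matrix.cons_val_three, Matrix.cons_val_four]
      linear_combination hZ
    have h2 : Bz.mulVec a 2 - ν * (![255, 5, -20, 80, -320] : Fin 5 → ZMod 1025) 2
        = Bz.mulVec a 0 - ν * (![255, 5, -20, 80, -320] : Fin 5 → ZMod 1025) 0 := by
      have hZ : 5 * ((-52) * a 0 + (13) * a 1 + (48) * a 2 + (-12) * a 3 + (3) * a 4 + (55) * ν : ZMod 1025) = 0 := by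
        apply hfive
        · have e : ((-52) * a 0 + (13) * a 1 + (48) * a 2 + (-12) * a 3 + (3) * a 4 + (55) * ν : ZMod 1025) = (3) * (a 0 + a 1 + a 2 + a 3 + a 4) + 5 * ((-11) * a 0 + (2) * a 1 + (9) * a 2 + (-3) * a 3 + (11) * ν : ZMod 1025) := by ring
          rw [e, map_add, map_mul, map_mul, map_ofNat, map_ofNat, hsa, h5c]
          ring
        · have e : ((-52) * a 0 + (13) * a 1 + (48) * a 2 + (-12) * a 3 + (3) * a 4 + (55) * ν : ZMod 1025) = (30) * (a 0 + 10 * a 1 + 100 * a 2 + 1000 * a 3 + 10000 * a 4) + (55) * ν + 41 * ((-2) * a 0 + (-7) * a 1 + (-72) * a 2 + (-732) * a 3 + (-7317) * a 4 : ZMod 1025) := by ring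
          rw [e, map_add, map_add, map_mul, map_mul, map_mul, map_ofNat, map_ofNat, map_ofNat, hν41]
          linear_combination (45 * lam + π41 ((-2) * a 0 + (-7) * a 1 + (-72) * a 2 + (-732) * a 3 + (-7317) * a 4 : ZMod 1025)) * h41c
      simp only [hmv2, hmv0, Matrix.cons_val_zero, Matrix.cons_val_one, Matrix.head_cons,
        Matrix.cons_val_two, Matrix.tail_cons, Matrix.cons_val_three, Matrix.cons_val_four]
      linear_combination hZ
    have h3 : Bz.mulVec a 3 - ν * (![255, 5, -20, 80, -320] : Fin 5 → ZMod 1025) 3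
        = Bz.mulVec a 0 - ν * (![255, 5, -20, 80, -320] : Fin 5 → ZMod 1025) 0 := by
      have hZ : 5 * ((-48) * a 0 + (12) * a 1 + (-3) * a 2 + (52) * a 3 + (-13) * a 4 + (35) * ν : ZMod 1025) = 0 := by
        apply hfive
        · have e : ((-48) * a 0 + (12) * a 1 + (-3) * a 2 + (52) * a 3 + (-13) * a 4 + (35) * ν : ZMod 1025) = (2) * (a 0 + a 1 + a 2 + a 3 + a 4) + 5 * ((-10) * a 0 + (2) * a 1 + (-1) * a 2 + (10) * a 3 + (-3) * a 4 + (7) * ν : ZMod 1025) := by ring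
          rw [e, map_add, map_mul, map_mul, map_ofNat, map_ofNat, hsa, h5c]
          ring
        · have e : ((-48) * a 0 + (12) * a 1 + (-3) * a 2 + (52) * a 3 + (-13) * a 4 + (35) * ν : ZMod 1025) = (34) * (a 0 + 10 * a 1 + 100 * a 2 + 1000 * a 3 + 10000 * a 4) + (35) * ν + 41 * ((-2) * a 0 + (-8) * a 1 + (-83) * a 2 + (-828) * a 3 + (-8293) * a 4 : ZMod 1025) := by ring
          rw [e, map_add, map_add, map_mul, map_mul, map_mul, map_ofNat, map_ofNat, map_ofNat, hν41]
          linear_combination (29 * lam + π41 ((-2) * a 0 + (-8) * a 1 + (-83) * a 2 + (-828) * a 3 + (-8293) * a 4 : ZMod 1025)) * h41c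
      simp only [hmv3, hmv0, Matrix.cons_val_zero, Matrix.cons_val_one, Matrix.head_cons,
        Matrix.cons_val_two, Matrix.tail_cons, Matrix.cons_val_three, Matrix.cons_val_four]
      linear_combination hZ
    have h4 : Bz.mulVec a 4 - ν * (![255, 5, -20, 80, -320] : Fin 5 → ZMod 1025) 4
        = Bz.mulVec a 0 - ν * (![255, 5, -20, 80, -320] : Fin 5 → ZMod 1025) 0 := by
      have hZ : 5 * ((-64) * a 0 + (16) * a 1 + (-4) * a 2 + (1) * a 3 + (51) * a 4 + (115) * ν : ZMod 1025) = 0 := by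
        apply hfive
        · have e : ((-64) * a 0 + (16) * a 1 + (-4) * a 2 + (1) * a 3 + (51) * a 4 + (115) * ν : ZMod 1025) = (a 0 + a 1 + a 2 + a 3 + a 4) + 5 * ((-13) * a 0 + (3) * a 1 + (-1) * a 2 + (10) * a 4 + (23) * ν : ZMod 1025) := by ring
          rw [e, map_add, map_mul, map_ofNat, hsa, h5c]
          ring
        · have e : ((-64) * a 0 + (16) * a 1 + (-4) * a 2 + (1) * a 3 + (51) * a 4 + (115) * ν : ZMod 1025) = (18) * (a 0 + 10 * a 1 + 100 * a 2 + 1000 * a 3 + 10000 * a 4) + (115) * ν + 41 * ((-2) * a 0 + (-4) * a 1 + (-44) * a 2 + (-439) * a 3 + (-4389) * a 4 : ZMod 1025) := by ring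
          rw [e, map_add, map_add, map_mul, map_mul, map_mul, map_ofNat, map_ofNat, map_ofNat, hν41]
          linear_combination (93 * lam + π41 ((-2) * a 0 + (-4) * a 1 + (-44) * a 2 + (-439) * a 3 + (-4389) * a 4 : ZMod 1025)) * h41c
      simp only [hmv4, hmv0, Matrix.cons_val_zero, Matrix.cons_val_one, Matrix.head_cons,
        Matrix.cons_val_two, Matrix.tail_cons, Matrix.cons_val_three, Matrix.cons_val_four]
      linear_combination hZ
    intro j
    fin_cases j
    · rfl
    · exact h1
    · exact h2
    · exact h3
    · exact h4
  -- the vector w0 and generator of the range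
  have hgS : (![5, 0, 0, 0, 0] : Fin 5 → ZMod 1025) ∈ S := by
    rw [hS]
    simp [Fin.sum_univ_five]
    rw [show ((5:ZMod 1025)) = ((5:ℕ):ZMod 1025) by norm_cast, map_natCast]
    decide
  have hBg : Bz.mulVec (![5, 0, 0, 0, 0] : Fin 5 → ZMod 1025)
      = (![255, 5, -20, 80, -320] : Fin 5 → ZMod 1025) := by
    have e0 := hmv0 (![5, 0, 0, 0, 0] : Fin 5 → ZMod 1025)
    have e1 := hmv1 (![5, 0, 0, 0, 0] : Fin 5 → ZMod 1025)
    have e2 := hmv2 (![5, 0, 0, 0, 0] : Fin 5 → ZMod 1025)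
    have e3 := hmv3 (![5, 0, 0, 0, 0] : Fin 5 → ZMod 1025)
    have e4 := hmv4 (![5, 0, 0, 0, 0] : Fin 5 → ZMod 1025)
    norm_num at e0 e1 e2 e3 e4
    have c0 : Bz.mulVec (![5, 0, 0, 0, 0] : Fin 5 → ZMod 1025) 0
        = (![255, 5, -20, 80, -320] : Fin 5 → ZMod 1025) 0 := by rw [e0]; decide
    have c1 : Bz.mulVec (![5, 0, 0, 0, 0] : Fin 5 → ZMod 1025) 1
        = (![255, 5, -20, 80, -320] : Fin 5 → ZMod 1025) 1 := by rw [e1]; decide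
    have c2 : Bz.mulVec (![5, 0, 0, 0, 0] : Fin 5 → ZMod 1025) 2
        = (![255, 5, -20, 80, -320] : Fin 5 → ZMod 1025) 2 := by rw [e2]; decide
    have c3 : Bz.mulVec (![5, 0, 0, 0, 0] : Fin 5 → ZMod 1025) 3
        = (![255, 5, -20, 80, -320] : Fin 5 → ZMod 1025) 3 := by rw [e3]; decide
    have c4 : Bz.mulVec (![5, 0, 0, 0, 0] : Fin 5 → ZMod 1025) 4
        = (![255, 5, -20, 80, -320] : Fin 5 → ZMod 1025) 4 := by rw [e4]; decide
    funext j
    fin_cases j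
    · exact c0
    · exact c1
    · exact c2
    · exact c3
    · exact c4
  have hfx : f (QuotientAddGroup.mk (⟨_, hgS⟩ : S))
      = QuotientAddGroup.mk (![255, 5, -20, 80, -320] : Fin 5 → ZMod 1025) := by
    rw [hf]; rw [show ((⟨_, hgS⟩ : S) : Fin 5 → ZMod 1025) = ![5,0,0,0,0] from rfl, hBg]
  set x' : f.range := ⟨QuotientAddGroup.mk (![255, 5, -20, 80, -320] : Fin 5 → ZMod 1025),
    AddMonoidHom.mem_range.mpr ⟨_, hfx⟩⟩ with hx'def
  have h41x : (zmultiplesHom _ x') (41:ℤ) = 0 := by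
    rw [zmultiplesHom_apply]
    apply Subtype.ext
    rw [AddSubgroup.coe_zsmul]
    show (41:ℤ) • (QuotientAddGroup.mk (![255, 5, -20, 80, -320] : Fin 5 → ZMod 1025)) = _
    rw [← QuotientAddGroup.mk_zsmul]
    rw [show ((41:ℤ) • (![255, 5, -20, 80, -320] : Fin 5 → ZMod 1025))
        = (fun _ => (205:ZMod 1025)) from by funext j; fin_cases j <;> decide]
    show _ = (0 : (Fin 5 → ZMod 1025) ⧸ AddSubgroup.closure {(fun _ => 1 : Fin 5 → ZMod 1025)})
    rw [QuotientAddGroup.eq_zero_iff]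
    exact hmemK _ (fun j => rfl)
  set φ : ZMod 41 →+ f.range := ZMod.lift 41 ⟨zmultiplesHom _ x', h41x⟩ with hφdef
  have hφnat : ∀ n : ℕ, φ ((n : ℕ) : ZMod 41) = (n:ℤ) • x' := by
    intro n
    have : ((n : ℕ) : ZMod 41) = ((n : ℤ) : ZMod 41) := by push_cast; rfl
    rw [this, hφdef, ZMod.lift_coe, zmultiplesHom_apply]
  have hφinj : Function.Injective φ := by
    rw [injective_iff_map_eq_zero]
    intro k hk
    have hkv : ((k.val : ℕ) : ZMod 41) = k := ZMod.natCast_rightInverse k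
    rw [← hkv, hφnat] at hk
    have hk' : ((k.val:ℤ) • (QuotientAddGroup.mk (![255, 5, -20, 80, -320] : Fin 5 → ZMod 1025))
        : (Fin 5 → ZMod 1025) ⧸ AddSubgroup.closure {(fun _ => 1 : Fin 5 → ZMod 1025)}) = 0 := by
      have := congrArg (fun (t : f.range) => (t : (Fin 5 → ZMod 1025) ⧸ AddSubgroup.closure {(fun _ => 1 : Fin 5 → ZMod 1025)})) hk
      simpa [AddSubgroup.coe_zsmul] using this
    rw [← QuotientAddGroup.mk_zsmul, QuotientAddGroup.eq_zero_iff,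
      AddSubgroup.mem_closure_singleton] at hk'
    obtain ⟨z, hz⟩ := hk'
    have e1 := congrFun hz 1
    have e2 := congrFun hz 2
    simp only [Pi.smul_apply, Matrix.cons_val_one, Matrix.head_cons, Matrix.cons_val_two,
      Matrix.tail_cons, zsmul_eq_mul, mul_one] at e1 e2
    have e25 : ((25 * k.val : ℕ) : ZMod 1025) = 0 := by
      push_cast at e1 e2 ⊢
      linear_combination e2 - e1
    rw [ZMod.natCast_eq_zero_iff] at e25
    have hlt : k.val < 41 := ZMod.val_lt k
    have : k.val = 0 := by omega
    rw [← hkv, this]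
    rfl
  have hφsurj : Function.Surjective φ := by
    rintro ⟨y, hy⟩
    obtain ⟨m, hm⟩ := AddMonoidHom.mem_range.mp hy
    obtain ⟨s, rfl⟩ := QuotientAddGroup.mk_surjective m
    set a : Fin 5 → ZMod 1025 := (s : Fin 5 → ZMod 1025) with hadef
    set n : ℕ := (33 * π41 (a 0 + 10 * a 1 + 100 * a 2 + 1000 * a 3 + 10000 * a 4)).val with hndef
    refine ⟨((n : ℕ) : ZMod 41), ?_⟩
    rw [hφnat]
    apply Subtype.ext
    rw [AddSubgroup.coe_zsmul]
    show (n:ℤ) • (QuotientAddGroup.mk (![255, 5, -20, 80, -320] : Fin 5 → ZMod 1025)) = y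
    rw [← hm, hf, ← QuotientAddGroup.mk_zsmul, natCast_zsmul]
    rw [QuotientAddGroup.eq_iff_sub_mem]
    apply hmemK
    intro j
    have hr := hrange a s.2 j
    simp only [Pi.sub_apply, Pi.smul_apply, Pi.mul_apply, Pi.natCast_apply, nsmul_eq_mul]
    linear_combination -hr
  -- ===== kernel part =====
  have hadd205 : ∀ c c' : ZMod 5, (205 : ZMod 1025) * ZMod.cast (c + c')
      = 205 * ZMod.cast c + 205 * ZMod.cast c' := by decide
  have hc0 : ∀ c : ZMod 5, (205 : ZMod 1025) * ZMod.cast c = 0 → c = 0 := by decide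
  have hαmem : ∀ (c : ZMod 5) (b : Fin 3 → ZMod 1025),
      (![205 * ZMod.cast c + 154 * b 0 + 64 * b 1 + 189 * b 2, b 0, b 1, b 2, 0]
        : Fin 5 → ZMod 1025) ∈ S := by
    intro c b
    rw [hS, Fin.sum_univ_five]
    show π5 ((205 * ZMod.cast c + 154 * b 0 + 64 * b 1 + 189 * b 2) + b 0 + b 1 + b 2 + 0) = 0
    have e : ((205 * ZMod.cast c + 154 * b 0 + 64 * b 1 + 189 * b 2) + b 0 + b 1 + b 2 + 0
        : ZMod 1025) = 5 * (41 * ZMod.cast c + 31 * b 0 + 13 * b 1 + 38 * b 2) := by ring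
    rw [e, map_mul, map_ofNat, h5c, zero_mul]
  have hBα : ∀ (c : ZMod 5) (b : Fin 3 → ZMod 1025),
      Bz.mulVec (![205 * ZMod.cast c + 154 * b 0 + 64 * b 1 + 189 * b 2, b 0, b 1, b 2, 0]
        : Fin 5 → ZMod 1025)
      = fun _ => (205 * ZMod.cast c + 410 * b 0 + 205 * b 2 : ZMod 1025) := by
    intro c b
    set vec : Fin 5 → ZMod 1025 :=
      ![205 * ZMod.cast c + 154 * b 0 + 64 * b 1 + 189 * b 2, b 0, b 1, b 2, 0] with hvec
    have m0 := hmv0 vec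
    have m1 := hmv1 vec
    have m2 := hmv2 vec
    have m3 := hmv3 vec
    have m4 := hmv4 vec
    rw [hvec] at m0 m1 m2 m3 m4
    simp only [Matrix.cons_val_zero, Matrix.cons_val_one, Matrix.head_cons,
      Matrix.cons_val_two, Matrix.tail_cons, Matrix.cons_val_three,
      Matrix.cons_val_four] at m0 m1 m2 m3 m4
    have d0 : Bz.mulVec vec 0 = 205 * ZMod.cast c + 410 * b 0 + 205 * b 2 := by
      rw [m0]
      linear_combination (51 * ZMod.cast c + 38 * b 0 + 16 * b 1 + 47 * b 2) * h1025
    have d1 : Bz.mulVec vec 1 = 205 * ZMod.cast c + 410 * b 0 + 205 * b 2 := by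
      rw [m1]; ring
    have d2 : Bz.mulVec vec 2 = 205 * ZMod.cast c + 410 * b 0 + 205 * b 2 := by
      rw [m2]
      linear_combination (-ZMod.cast c - b 0 - b 2) * h1025
    have d3 : Bz.mulVec vec 3 = 205 * ZMod.cast c + 410 * b 0 + 205 * b 2 := by
      rw [m3]
      linear_combination (3 * ZMod.cast c + 2 * b 0 + b 1 + 3 * b 2) * h1025
    have d4 : Bz.mulVec vec 4 = 205 * ZMod.cast c + 410 * b 0 + 205 * b 2 := by
      rw [m4]
      linear_combination (-13 * ZMod.cast c - 10 * b 0 - 4 * b 1 - 12 * b 2) * h1025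
    funext j
    fin_cases j
    · exact d0
    · exact d1
    · exact d2
    · exact d3
    · exact d4
  set Ψa : (ZMod 5 × (Fin 3 → ZMod 1025)) →+ S := AddMonoidHom.mk'
    (fun p => (⟨![205 * ZMod.cast p.1 + 154 * p.2 0 + 64 * p.2 1 + 189 * p.2 2,
        p.2 0, p.2 1, p.2 2, 0], hαmem p.1 p.2⟩ : S))
    (by
      intro p q
      apply Subtype.ext
      show (![205 * ZMod.cast (p.1 + q.1) + 154 * (p.2 0 + q.2 0) + 64 * (p.2 1 + q.2 1)
          + 189 * (p.2 2 + q.2 2), p.2 0 + q.2 0, p.2 1 + q.2 1, p.2 2 + q.2 2, 0]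
          : Fin 5 → ZMod 1025) = _
      funext j
      have c0 : (205 * ZMod.cast (p.1 + q.1) + 154 * (p.2 0 + q.2 0) + 64 * (p.2 1 + q.2 1)
          + 189 * (p.2 2 + q.2 2) : ZMod 1025)
          = (205 * ZMod.cast p.1 + 154 * p.2 0 + 64 * p.2 1 + 189 * p.2 2)
            + (205 * ZMod.cast q.1 + 154 * q.2 0 + 64 * q.2 1 + 189 * q.2 2) := by
        rw [hadd205]; ring
      fin_cases j
      · exact c0
      · rfl
      · rfl
      · rfl
      · show (0 : ZMod 1025) = 0 + 0; rw [add_zero]) with hΨadef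
  have hΨaval : ∀ p : ZMod 5 × (Fin 3 → ZMod 1025), (Ψa p : Fin 5 → ZMod 1025)
      = ![205 * ZMod.cast p.1 + 154 * p.2 0 + 64 * p.2 1 + 189 * p.2 2,
          p.2 0, p.2 1, p.2 2, 0] := fun p => rfl
  have hker : ∀ p : ZMod 5 × (Fin 3 → ZMod 1025),
      (QuotientAddGroup.mk' (AddSubgroup.closure {ones})) (Ψa p) ∈ f.ker := by
    intro p
    rw [AddMonoidHom.mem_ker, QuotientAddGroup.mk'_apply, hf, hΨaval p, hBα p.1 p.2]
    rw [show (0 : (Fin 5 → ZMod 1025) ⧸ AddSubgroup.closure {(fun _ => 1 : Fin 5 → ZMod 1025)})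
      = QuotientAddGroup.mk 0 from rfl, QuotientAddGroup.eq_iff_sub_mem]
    apply hmemK
    intro j
    rfl
  set Ψ : (ZMod 5 × (Fin 3 → ZMod 1025)) →+ f.ker :=
    AddMonoidHom.codRestrict ((QuotientAddGroup.mk' (AddSubgroup.closure {ones})).comp Ψa)
      f.ker hker with hΨdef
  have hΨinj : Function.Injective Ψ := by
    rw [injective_iff_map_eq_zero]
    intro p hp
    have hp' : (QuotientAddGroup.mk (Ψa p) :
        S ⧸ AddSubgroup.closure {ones}) = 0 := by
      have := congrArg (fun t : f.ker => (t : S ⧸ AddSubgroup.closure {ones})) hp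
      simpa [hΨdef] using this
    rw [QuotientAddGroup.eq_zero_iff, AddSubgroup.mem_closure_singleton] at hp'
    obtain ⟨z, hz⟩ := hp'
    have hz' : (fun _ => (z : ZMod 1025)) = (Ψa p : Fin 5 → ZMod 1025) := by
      have := congrArg (fun t : S => (t : Fin 5 → ZMod 1025)) hz
      simp only [AddSubgroup.coe_zsmul, hones] at this
      rw [← this]
      funext j
      show (z : ZMod 1025) = z • (1 : ZMod 1025)
      rw [zsmul_one]
    rw [hΨaval p] at hz'
    have e4 : (z : ZMod 1025) = 0 := congrFun hz' 4
    have e1 : (z : ZMod 1025) = p.2 0 := congrFun hz' 1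
    have e2 : (z : ZMod 1025) = p.2 1 := congrFun hz' 2
    have e3 : (z : ZMod 1025) = p.2 2 := congrFun hz' 3
    have e0 : (z : ZMod 1025)
        = 205 * ZMod.cast p.1 + 154 * p.2 0 + 64 * p.2 1 + 189 * p.2 2 := congrFun hz' 0
    rw [e4] at e1 e2 e3
    rw [e4, ← e1, ← e2, ← e3] at e0
    have hp1 : p.1 = 0 := by
      apply hc0
      linear_combination -e0
    have hp2 : p.2 = 0 := by
      funext i
      fin_cases i
      · exact e1.symm
      · exact e2.symm
      · exact e3.symm
    exact Prod.ext hp1 hp2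
  have hΨsurj : Function.Surjective Ψ := by
    rintro ⟨y, hy⟩
    obtain ⟨s, rfl⟩ := QuotientAddGroup.mk_surjective y
    have hBa : f (QuotientAddGroup.mk s) = 0 := AddMonoidHom.mem_ker.mp hy
    rw [hf] at hBa
    set a : Fin 5 → ZMod 1025 := (s : Fin 5 → ZMod 1025) with hadef
    rw [QuotientAddGroup.eq_zero_iff, AddSubgroup.mem_closure_singleton] at hBa
    obtain ⟨z, hz⟩ := hBa
    have hE : Bz.mulVec a 1 = Bz.mulVec a 0 := by
      rw [← congrFun hz 1, ← congrFun hz 0]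
      rfl
    rw [hmv0, hmv1] at hE
    have h5w : 5 * (51 * a 0 - 64 * a 1 + 16 * a 2 - 4 * a 3 + a 4) = 0 := by
      linear_combination -hE
    have hwdvd : (1025 : ℕ) ∣ 5 * (51 * a 0 - 64 * a 1 + 16 * a 2 - 4 * a 3 + a 4).val := by
      rw [← ZMod.natCast_eq_zero_iff]
      push_cast [hval]
      exact h5w
    have hw41 : π41 (51 * a 0 - 64 * a 1 + 16 * a 2 - 4 * a 3 + a 4) = 0 := by
      rw [hcast41]; omega
    have hsa : π5 (a 0 + a 1 + a 2 + a 3 + a 4) = 0 := by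
      have := (hS a).mp s.2
      rwa [Fin.sum_univ_five] at this
    set y0 : ZMod 1025 := a 0 - 154 * a 1 - 64 * a 2 - 189 * a 3 + 406 * a 4 with hy0def
    have hy05 : π5 y0 = 0 := by
      have e : y0 = (a 0 + a 1 + a 2 + a 3 + a 4)
          + 5 * ((-31) * a 1 + (-13) * a 2 + (-38) * a 3 + 81 * a 4) := by rw [hy0def]; ring
      rw [e, map_add, map_mul, map_ofNat, hsa, h5c, zero_add, zero_mul]
    have hy041 : π41 y0 = 0 := by
      have e : (51 * a 0 - 64 * a 1 + 16 * a 2 - 4 * a 3 + a 4 : ZMod 1025)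
          = 10 * y0 + 41 * (a 0 + 36 * a 1 + 16 * a 2 + 46 * a 3 + (-99) * a 4) := by
        rw [hy0def]; ring
      rw [e, map_add, map_mul, map_mul, map_ofNat, map_ofNat] at hw41
      linear_combination 37 * hw41 + (-(9 * π41 y0)
        - 37 * π41 (a 0 + 36 * a 1 + 16 * a 2 + 46 * a 3 + (-99) * a 4)) * h41c
    rw [hcast5] at hy05
    rw [hcast41] at hy041
    have hjlt : y0.val / 205 < 5 := by have := ZMod.val_lt y0; omega
    have hjval : 205 * (y0.val / 205) = y0.val := by omega
    set c : ZMod 5 := ((y0.val / 205 : ℕ) : ZMod 5) with hcdef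
    have hc : (205 : ZMod 1025) * ZMod.cast c = y0 := by
      rw [hcdef, ← ZMod.natCast_val, ZMod.val_cast_of_lt hjlt]
      rw [show ((205 : ZMod 1025) * ((y0.val / 205 : ℕ) : ZMod 1025))
        = ((205 * (y0.val / 205) : ℕ) : ZMod 1025) by push_cast; ring, hjval, hval]
    set b : Fin 3 → ZMod 1025 := ![a 1 - a 4, a 2 - a 4, a 3 - a 4] with hbdef
    refine ⟨(c, b), ?_⟩
    apply Subtype.ext
    show (QuotientAddGroup.mk' (AddSubgroup.closure {ones})) (Ψa (c, b)) = _
    rw [QuotientAddGroup.mk'_apply, QuotientAddGroup.eq_iff_sub_mem,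
      AddSubgroup.mem_closure_singleton]
    refine ⟨-((a 4).val : ℤ), ?_⟩
    apply Subtype.ext
    rw [show ((((-((a 4).val : ℤ)) • ones) : S) : Fin 5 → ZMod 1025)
      = (-((a 4).val : ℤ)) • (ones : Fin 5 → ZMod 1025) from AddSubgroup.coe_zsmul _ _ _,
      hones, show (((Ψa (c, b) - s) : S) : Fin 5 → ZMod 1025)
      = (Ψa (c, b) : Fin 5 → ZMod 1025) - a from rfl, hΨaval]
    have hb0 : b 0 = a 1 - a 4 := rfl
    have hb1 : b 1 = a 2 - a 4 := rfl
    have hb2 : b 2 = a 3 - a 4 := rfl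
    funext j
    have g0 : (-((a 4).val : ℤ)) • (1 : ZMod 1025)
        = (205 * ZMod.cast c + 154 * b 0 + 64 * b 1 + 189 * b 2) - a 0 := by
      rw [zsmul_one]; push_cast [hval]
      rw [hc, hb0, hb1, hb2, hy0def]; ring
    have g1 : (-((a 4).val : ℤ)) • (1 : ZMod 1025) = b 0 - a 1 := by
      rw [zsmul_one]; push_cast [hval]; rw [hb0]; ring
    have g2 : (-((a 4).val : ℤ)) • (1 : ZMod 1025) = b 1 - a 2 := by
      rw [zsmul_one]; push_cast [hval]; rw [hb1]; ring
    have g3 : (-((a 4).val : ℤ)) • (1 : ZMod 1025) = b 2 - a 3 := by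
      rw [zsmul_one]; push_cast [hval]; rw [hb2]; ring
    have g4 : (-((a 4).val : ℤ)) • (1 : ZMod 1025) = 0 - a 4 := by
      rw [zsmul_one]; push_cast [hval]; ring
    fin_cases j
    · exact g0
    · exact g1
    · exact g2
    · exact g3
    · exact g4
  exact ⟨⟨(AddEquiv.ofBijective φ ⟨hφinj, hφsurj⟩).symm⟩,
    ⟨(AddEquiv.ofBijective Ψ ⟨hΨinj, hΨsurj⟩).symm⟩⟩
end
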